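/- Let (Ω₂,ℙ₂) be a probability space, let U, W : [0,1] × [0,1] × Ω₂ → ℝ be P-variables ([0,1] with Lebesgue measure), let Ũ, W̃ be the associated probability graphons, and let f₁,…,f_k be the indicator functions of a measurable partition of [0,1]. For every ε > 0 there exists δ > 0 such that if d_□(Ũ,W̃) < δ, then d_LP(S(f₁,…,f_k,W), S(f₁,…,f_k,U)) < ε. -/

import Mathlib

set_option autoImplicit false

open MeasureTheory Set
open scoped ENNReal NNReal

noncomputable section

/-- `ℝ^n` with the Euclidean metric. -/
abbrev RE (n : ℕ) : Type := EuclideanSpace ℝ (Fin n)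

/-- The random vector `(f₁(x₁), f₁(x₂), …, f_k(x₁), f_k(x₂), W(x₁,x₂,x₁₂))`. -/
def sVec {Ω₁ Ω₂ : Type*} (k : ℕ) (f : Fin k → Ω₁ → ℝ)
    (W : Ω₁ × Ω₁ × Ω₂ → ℝ) (x : Ω₁ × Ω₁ × Ω₂) : RE (2 * k + 1) :=
  (WithLp.equiv 2 (Fin (2 * k + 1) → ℝ)).symm fun i =>
    if _ : (i : ℕ) < 2 * k then
      if (i : ℕ) % 2 = 0 then f ⟨(i : ℕ) / 2, by omega⟩ x.1
      else f ⟨(i : ℕ) / 2, by omega⟩ x.2.1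
    else W x

/-- `S(f₁,…,f_k,W)`: the pushforward of the product measure `P₁ ⊗ P₁ ⊗ P₂` under `sVec`. -/
def Smeasure {Ω₁ Ω₂ : Type*} [MeasurableSpace Ω₁] [MeasurableSpace Ω₂]
    (P₁ : Measure Ω₁) (P₂ : Measure Ω₂) {k : ℕ} (f : Fin k → Ω₁ → ℝ)
    (W : Ω₁ × Ω₁ × Ω₂ → ℝ) : Measure (RE (2 * k + 1)) :=
  (P₁.prod (P₁.prod P₂)).map (sVec k f W)

/-- The `k`-profile `S_k(W)`. -/
def SkSet {Ω₁ Ω₂ : Type*} [MeasurableSpace Ω₁] [MeasurableSpace Ω₂]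
    (P₁ : Measure Ω₁) (P₂ : Measure Ω₂) (k : ℕ)
    (W : Ω₁ × Ω₁ × Ω₂ → ℝ) : Set (Measure (RE (2 * k + 1))) :=
  {μ | ∃ f : Fin k → Ω₁ → ℝ, (∀ i, Measurable (f i)) ∧
    (∀ i x, f i x ∈ Icc (-1 : ℝ) 1) ∧ μ = Smeasure P₁ P₂ f W}

/-- A function partition: `{0,1}`-valued measurable functions summing to `1`. -/
def IsFunctionPartition {Ω₁ : Type*} [MeasurableSpace Ω₁] {k : ℕ}
    (f : Fin k → Ω₁ → ℝ) : Prop :=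
  (∀ i, Measurable (f i)) ∧ (∀ i x, f i x = 0 ∨ f i x = 1) ∧ ∀ x, ∑ i, f i x = 1

/-- The restricted `k`-profile `S'_k(W)`. -/
def SkSet' {Ω₁ Ω₂ : Type*} [MeasurableSpace Ω₁] [MeasurableSpace Ω₂]
    (P₁ : Measure Ω₁) (P₂ : Measure Ω₂) (k : ℕ)
    (W : Ω₁ × Ω₁ × Ω₂ → ℝ) : Set (Measure (RE (2 * k + 1))) :=
  {μ | ∃ f : Fin k → Ω₁ → ℝ, IsFunctionPartition f ∧ μ = Smeasure P₁ P₂ f W}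

/-- Hausdorff edistance (w.r.t. the Lévy–Prokhorov distance) between sets of measures. -/
def eHausLP {X : Type*} [MeasurableSpace X] [PseudoEMetricSpace X]
    (A B : Set (Measure X)) : ℝ≥0∞ :=
  max (⨆ μ ∈ A, ⨅ ν ∈ B, levyProkhorovEDist μ ν)
      (⨆ ν ∈ B, ⨅ μ ∈ A, levyProkhorovEDist μ ν)

/-- Hausdorff distance (w.r.t. the Lévy–Prokhorov distance) between sets of measures. -/
def dHLP {X : Type*} [MeasurableSpace X] [PseudoEMetricSpace X]
    (A B : Set (Measure X)) : ℝ := (eHausLP A B).toReal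

/-- A `P`-variable: a measurable real-valued function on a product `Ω₁ × Ω₁ × Ω₂`
of probability spaces. -/
structure PVar where
  (Ω₁ : Type*)
  (Ω₂ : Type*)
  [m₁ : MeasurableSpace Ω₁]
  [m₂ : MeasurableSpace Ω₂]
  (P₁ : Measure Ω₁)
  (P₂ : Measure Ω₂)
  (prob₁ : IsProbabilityMeasure P₁)
  (prob₂ : IsProbabilityMeasure P₂)
  (W : Ω₁ × Ω₁ × Ω₂ → ℝ)
  (meas : Measurable W)

attribute [instance] PVar.m₁ PVar.m₂

/-- The underlying product probability measure of a `P`-variable. -/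
def PVar.vol (V : PVar) : Measure (V.Ω₁ × V.Ω₁ × V.Ω₂) := V.P₁.prod (V.P₁.prod V.P₂)

/-- The `k`-profile of a `P`-variable. -/
def PVar.Sk (V : PVar) (k : ℕ) : Set (Measure (RE (2 * k + 1))) := SkSet V.P₁ V.P₂ k V.W

/-- The restricted `k`-profile of a `P`-variable. -/
def PVar.Sk' (V : PVar) (k : ℕ) : Set (Measure (RE (2 * k + 1))) := SkSet' V.P₁ V.P₂ k V.W

/-- The `P`-variables metric `d_M`. -/
def dM (V U : PVar) : ℝ :=
  ∑' k : ℕ, (2 : ℝ)⁻¹ ^ (k + 1) * dHLP (V.Sk (k + 1)) (U.Sk (k + 1))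


/-- The probability graphon (Markov kernel `[0,1]² → 𝒫(ℝ)`) associated to a
P-variable on `[0,1] × [0,1] × Ω₂`: `W̃(x₁,x₂;·)` is the law of `W(x₁,x₂,·)`. -/
def assocGraphon {Ω₂ : Type*} [MeasurableSpace Ω₂] (P₂ : Measure Ω₂)
    (W : unitInterval × unitInterval × Ω₂ → ℝ)
    (x : unitInterval × unitInterval) : Measure ℝ :=
  P₂.map fun ω => W (x.1, x.2, ω)

/-- `W̃(A;·) = ∫_A W̃(x,y;·) dx dy` for measurable `A ⊆ [0,1]²`. -/
def graphonInt (K : unitInterval × unitInterval → Measure ℝ)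
    (A : Set (unitInterval × unitInterval)) : Measure ℝ :=
  (((volume : Measure unitInterval).prod volume).restrict A).bind K

/-- The cut semidistance `d_□` between two probability graphons on `[0,1]`:
`sup_{S,T} d_LP(K(S×T;·), L(S×T;·))` over measurable `S, T ⊆ [0,1]`. -/
def cutDistKer (K L : unitInterval × unitInterval → Measure ℝ) : ℝ :=
  ⨆ p : {S : Set unitInterval // MeasurableSet S} ×
        {T : Set unitInterval // MeasurableSet T},
    levyProkhorovDist (graphonInt K (p.1.1 ×ˢ p.2.1)) (graphonInt L (p.1.1 ×ˢ p.2.1))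

/-- The unlabelled cut distance `δ_□`: infimum of `d_□(K, L∘(φ×φ))` over
Lebesgue-measure-preserving bijections `φ` of `[0,1]`. -/
def unlabCutDist (K L : unitInterval × unitInterval → Measure ℝ) : ℝ :=
  ⨅ φ : {φ : unitInterval ≃ᵐ unitInterval //
          MeasurePreserving φ (volume : Measure unitInterval) volume},
    cutDistKer K fun x => L (φ.1 x.1, φ.1 x.2)

/-- A P-variable on `[0,1] × [0,1] × Ω₂` (with Lebesgue measure on `[0,1]`),
bundled as a `PVar`. -/
def PVar.ofUnitInterval {Ω₂ : Type*} [MeasurableSpace Ω₂] (P₂ : Measure Ω₂)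
    [h₂ : IsProbabilityMeasure P₂] (W : unitInterval × unitInterval × Ω₂ → ℝ)
    (hW : Measurable W) : PVar :=
  ⟨unitInterval, Ω₂, (volume : Measure unitInterval), P₂, inferInstance, h₂, W, hW⟩

/- ===== auxiliary lemmas ===== -/

section Aux

lemma measurable_sVec' {Ω₁ Ω₂ : Type*} [MeasurableSpace Ω₁] [MeasurableSpace Ω₂]
    {k : ℕ} {f : Fin k → Ω₁ → ℝ} {W : Ω₁ × Ω₁ × Ω₂ → ℝ}
    (hf : ∀ i, Measurable (f i)) (hW : Measurable W) : Measurable (sVec k f W) := by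
  have : sVec k f W = (MeasurableEquiv.toLp 2 (Fin (2 * k + 1) → ℝ)) ∘
      (fun x m => if _ : (m : ℕ) < 2 * k then
        if (m : ℕ) % 2 = 0 then f ⟨(m : ℕ) / 2, by omega⟩ x.1
        else f ⟨(m : ℕ) / 2, by omega⟩ x.2.1
      else W x) := rfl
  rw [this]
  refine (MeasurableEquiv.measurable _).comp (measurable_pi_lambda _ fun m => ?_)
  by_cases h : (m : ℕ) < 2 * k
  · simp only [h, dif_pos]
    by_cases h2 : (m : ℕ) % 2 = 0
    · simpa [h2, Function.comp_def] using (hf _).comp measurable_fst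
    · simpa [h2, Function.comp_def] using (hf _).comp (measurable_fst.comp measurable_snd)
  · simpa [h] using hW

/-- The isometric embedding `ℝ → ℝ^{2k+1}` corresponding to the cell `(i,j)`. -/
def cellEmb (k : ℕ) (i j : Fin k) (t : ℝ) : RE (2 * k + 1) :=
  (WithLp.equiv 2 (Fin (2 * k + 1) → ℝ)).symm fun m =>
    if _ : (m : ℕ) < 2 * k then
      if (m : ℕ) % 2 = 0 then (if (⟨(m : ℕ) / 2, by omega⟩ : Fin k) = i then 1 else 0)
      else (if (⟨(m : ℕ) / 2, by omega⟩ : Fin k) = j then 1 else 0)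
    else t

lemma measurable_cellEmb {k : ℕ} (i j : Fin k) : Measurable (cellEmb k i j) := by
  have : cellEmb k i j = (MeasurableEquiv.toLp 2 (Fin (2 * k + 1) → ℝ)) ∘
      (fun t m => if _ : (m : ℕ) < 2 * k then
        if (m : ℕ) % 2 = 0 then (if (⟨(m : ℕ) / 2, by omega⟩ : Fin k) = i then 1 else 0)
        else (if (⟨(m : ℕ) / 2, by omega⟩ : Fin k) = j then 1 else 0)
      else t) := rfl
  rw [this]
  refine (MeasurableEquiv.measurable _).comp (measurable_pi_lambda _ fun m => ?_)
  by_cases h : (m : ℕ) < 2 * k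
  · simp [h]
  · simpa [h] using measurable_id'

lemma cellEmb_dist {k : ℕ} (i j : Fin k) (t s : ℝ) :
    dist (cellEmb k i j t) (cellEmb k i j s) = dist t s := by
  rw [EuclideanSpace.dist_eq]
  rw [Finset.sum_eq_single (⟨2 * k, by omega⟩ : Fin (2 * k + 1))]
  · have h1 : cellEmb k i j t ⟨2 * k, by omega⟩ = t := by
      show (if h : 2 * k < 2 * k then _ else t) = t
      simp
    have h2 : cellEmb k i j s ⟨2 * k, by omega⟩ = s := by
      show (if h : 2 * k < 2 * k then _ else s) = s
      simp
    rw [h1, h2, Real.sqrt_sq dist_nonneg]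
  · intro m _ hm
    have hmlt : (m : ℕ) < 2 * k := by
      have h1 := m.2
      have h2 : (m : ℕ) ≠ 2 * k := fun h => hm (Fin.ext h)
      omega
    have : cellEmb k i j t m = cellEmb k i j s m := by
      show (if h : (m : ℕ) < 2 * k then _ else t) = (if h : (m : ℕ) < 2 * k then _ else s)
      simp [hmlt]
    rw [this, dist_self]
    norm_num
  · simp

lemma cellEmb_thickening_subset {k : ℕ} (i j : Fin k) {δ : ℝ} {B : Set (RE (2 * k + 1))} :
    Metric.thickening δ (cellEmb k i j ⁻¹' B) ⊆ cellEmb k i j ⁻¹' (Metric.thickening δ B) := by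
  intro t ht
  obtain ⟨s, hs, hds⟩ := Metric.mem_thickening_iff.mp ht
  exact Metric.mem_thickening_iff.mpr ⟨cellEmb k i j s, hs, by rwa [cellEmb_dist]⟩

variable {Ω₂ : Type*} [MeasurableSpace Ω₂] (P₂ : Measure Ω₂) [IsProbabilityMeasure P₂]
  (V : unitInterval × unitInterval × Ω₂ → ℝ)

lemma measurable_flat (hV : Measurable V) :
    Measurable (fun p : (unitInterval × unitInterval) × Ω₂ => V (p.1.1, p.1.2, p.2)) :=
  hV.comp ((measurable_fst.comp measurable_fst).prodMk
    ((measurable_snd.comp measurable_fst).prodMk measurable_snd))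

lemma measurable_assocGraphon (hV : Measurable V) : Measurable (assocGraphon P₂ V) := by
  apply Measure.measurable_of_measurable_coe
  intro s hs
  have h1 : ∀ x : unitInterval × unitInterval, assocGraphon P₂ V x s
      = P₂ (Prod.mk x ⁻¹' ((fun p : (unitInterval × unitInterval) × Ω₂ =>
          V (p.1.1, p.1.2, p.2)) ⁻¹' s)) := by
    intro x
    have hm : Measurable fun ω => V (x.1, x.2, ω) := hV.comp (by fun_prop)
    rw [assocGraphon, Measure.map_apply hm hs]
    rfl
  simp_rw [h1]
  exact measurable_measure_prodMk_left (measurable_flat V hV hs)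

/-- The rectangle integral of the associated graphon is the law of `V` on the
corresponding cell. -/
lemma graphonInt_eq_map (hV : Measurable V) {A B : Set unitInterval}
    (hA : MeasurableSet A) (hB : MeasurableSet B) :
    graphonInt (assocGraphon P₂ V) (A ×ˢ B)
      = (((volume : Measure unitInterval).prod
          ((volume : Measure unitInterval).prod P₂)).restrict (A ×ˢ B ×ˢ univ)).map V := by
  ext s hs
  rw [graphonInt, Measure.bind_apply hs (measurable_assocGraphon P₂ V hV).aemeasurable]
  have h1 : ∀ x : unitInterval × unitInterval, assocGraphon P₂ V x s
      = P₂ (Prod.mk x ⁻¹' ((fun p : (unitInterval × unitInterval) × Ω₂ =>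
          V (p.1.1, p.1.2, p.2)) ⁻¹' s)) := by
    intro x
    have hm : Measurable fun ω => V (x.1, x.2, ω) := hV.comp (by fun_prop)
    rw [assocGraphon, Measure.map_apply hm hs]
    rfl
  simp_rw [h1]
  rw [← Measure.prod_apply (measurable_flat V hV hs)]
  have massoc : ((volume : Measure unitInterval).prod
      ((volume : Measure unitInterval).prod P₂))
      = Measure.map MeasurableEquiv.prodAssoc
        (((volume : Measure unitInterval).prod (volume : Measure unitInterval)).prod P₂) :=
    (Measure.prodAssoc_prod).symm
  rw [Measure.map_apply hV hs, massoc,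
    Measure.restrict_map (MeasurableEquiv.prodAssoc).measurable
      (hA.prod (hB.prod MeasurableSet.univ)),
    Measure.map_apply (MeasurableEquiv.prodAssoc).measurable (hV hs)]
  have hpre : ((MeasurableEquiv.prodAssoc : (unitInterval × unitInterval) × Ω₂ ≃ᵐ _)
      ⁻¹' (A ×ˢ B ×ˢ univ)) = (A ×ˢ B) ×ˢ univ := by
    ext p
    simp [MeasurableEquiv.prodAssoc, and_assoc]
  rw [hpre]
  conv_lhs => rw [← Measure.restrict_univ (μ := P₂)]
  rw [Measure.prod_restrict]
  rfl

lemma graphonInt_mass_le_one (hV : Measurable V) {A B : Set unitInterval}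
    (hA : MeasurableSet A) (hB : MeasurableSet B) :
    graphonInt (assocGraphon P₂ V) (A ×ˢ B) univ ≤ 1 := by
  rw [graphonInt_eq_map P₂ V hV hA hB, Measure.map_apply hV MeasurableSet.univ]
  simp only [preimage_univ, Measure.restrict_apply_univ]
  exact prob_le_one

/-- Decomposition of the `S`-measure of the indicator partition over the cells. -/
lemma Smeasure_apply_eq_sum {Ω₂ : Type*} [MeasurableSpace Ω₂] (P₂ : Measure Ω₂)
    [IsProbabilityMeasure P₂] (V : unitInterval × unitInterval × Ω₂ → ℝ)
    (hV : Measurable V) {k : ℕ} (P : Fin k → Set unitInterval)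
    (hPm : ∀ i, MeasurableSet (P i)) (hPd : Pairwise (Function.onFun Disjoint P))
    (hPu : (⋃ i, P i) = univ) {B : Set (RE (2 * k + 1))} (hB : MeasurableSet B) :
    Smeasure (volume : Measure unitInterval) P₂
        (fun i => (P i).indicator fun _ => (1 : ℝ)) V B
      = ∑ p : Fin k × Fin k,
          graphonInt (assocGraphon P₂ V) (P p.1 ×ˢ P p.2) (cellEmb k p.1 p.2 ⁻¹' B) := by
  classical
  set f : Fin k → unitInterval → ℝ := fun i => (P i).indicator fun _ => (1 : ℝ) with hf
  have hfm : ∀ i, Measurable (f i) :=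
    fun i => (measurable_const.indicator (hPm i))
  have hsv : Measurable (sVec k f V) := measurable_sVec' hfm hV
  set μ := ((volume : Measure unitInterval).prod ((volume : Measure unitInterval).prod P₂))
    with hμ
  rw [Smeasure, Measure.map_apply hsv hB]
  set T := sVec k f V ⁻¹' B with hT
  have hTm : MeasurableSet T := hsv hB
  have hcellm : ∀ p : Fin k × Fin k,
      MeasurableSet (P p.1 ×ˢ P p.2 ×ˢ (univ : Set Ω₂)) :=
    fun p => (hPm p.1).prod ((hPm p.2).prod MeasurableSet.univ)
  -- pointwise identification on a cell
  have hpt : ∀ (i j : Fin k) (x : unitInterval × unitInterval × Ω₂),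
      x.1 ∈ P i → x.2.1 ∈ P j → sVec k f V x = cellEmb k i j (V x) := by
    intro i j x hx1 hx2
    have hv1 : ∀ m' : Fin k, (P m').indicator (fun _ => (1 : ℝ)) x.1
        = if m' = i then 1 else 0 := by
      intro m'
      by_cases he : m' = i
      · subst he; simp [indicator_of_mem hx1]
      · rw [if_neg he, indicator_of_notMem]
        exact fun hmem => (hPd he).ne_of_mem hmem hx1 rfl
    have hv2 : ∀ m' : Fin k, (P m').indicator (fun _ => (1 : ℝ)) x.2.1
        = if m' = j then 1 else 0 := by
      intro m'
      by_cases he : m' = j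
      · subst he; simp [indicator_of_mem hx2]
      · rw [if_neg he, indicator_of_notMem]
        exact fun hmem => (hPd he).ne_of_mem hmem hx2 rfl
    unfold sVec cellEmb
    congr 1
    funext m
    by_cases h : (m : ℕ) < 2 * k
    · simp only [h, dif_pos]
      by_cases h2 : (m : ℕ) % 2 = 0
      · rw [if_pos h2, if_pos h2]
        exact hv1 _
      · rw [if_neg h2, if_neg h2]
        exact hv2 _
    · simp [h]
  have hcover : T = ⋃ p : Fin k × Fin k, T ∩ (P p.1 ×ˢ P p.2 ×ˢ univ) := by
    ext x
    constructor
    · intro hx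
      have h1 : x.1 ∈ ⋃ i, P i := hPu ▸ mem_univ _
      have h2 : x.2.1 ∈ ⋃ i, P i := hPu ▸ mem_univ _
      obtain ⟨i, hi⟩ := mem_iUnion.mp h1
      obtain ⟨j, hj⟩ := mem_iUnion.mp h2
      exact mem_iUnion.mpr ⟨(i, j), hx, hi, hj, mem_univ _⟩
    · intro hx
      obtain ⟨p, hp, -⟩ := mem_iUnion.mp hx
      exact hp
  have hdisj : Pairwise (Function.onFun Disjoint
      fun p : Fin k × Fin k => T ∩ (P p.1 ×ˢ P p.2 ×ˢ univ)) := by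
    intro p q hpq
    refine Disjoint.inter_left' _ (Disjoint.inter_right' _ ?_)
    rcases Prod.mk.injEq p.1 p.2 q.1 q.2 ▸ (fun h => hpq (Prod.ext h.1 h.2) : ¬ (p.1 = q.1 ∧ p.2 = q.2)) with h
    by_cases h1 : p.1 = q.1
    · have h2 : p.2 ≠ q.2 := fun h2 => hpq (Prod.ext h1 h2)
      intro s hs1 hs2 x hx
      have hx1 := hs1 hx
      have hx2 := hs2 hx
      exact ((hPd h2).ne_of_mem hx1.2.1 hx2.2.1) rfl
    · intro s hs1 hs2 x hx
      have hx1 := hs1 hx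
      have hx2 := hs2 hx
      exact ((hPd h1).ne_of_mem hx1.1 hx2.1) rfl
  rw [hcover, measure_iUnion hdisj (fun p => hTm.inter (hcellm p)), tsum_fintype]
  refine Finset.sum_congr rfl fun p _ => ?_
  have hkey : T ∩ (P p.1 ×ˢ P p.2 ×ˢ univ)
      = (fun x => cellEmb k p.1 p.2 (V x)) ⁻¹' B ∩ (P p.1 ×ˢ P p.2 ×ˢ univ) := by
    ext x
    constructor
    · rintro ⟨hxT, hxc⟩
      refine ⟨?_, hxc⟩
      have heq := hpt p.1 p.2 x hxc.1 hxc.2.1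
      have hxT' : sVec k f V x ∈ B := hxT
      rw [heq] at hxT'
      exact hxT'
    · rintro ⟨hxB, hxc⟩
      refine ⟨?_, hxc⟩
      have heq := hpt p.1 p.2 x hxc.1 hxc.2.1
      show sVec k f V x ∈ B
      rw [heq]
      exact hxB
  have hms : MeasurableSet ((fun x => cellEmb k p.1 p.2 (V x)) ⁻¹' B) :=
    (measurable_cellEmb p.1 p.2).comp hV hB
  rw [hkey, ← Measure.restrict_apply hms,
    graphonInt_eq_map P₂ V hV (hPm p.1) (hPm p.2),
    Measure.map_apply hV (measurable_cellEmb p.1 p.2 hB)]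
  rfl

end Aux

/-- Let `U, W` be P-variables on `[0,1] × [0,1] × Ω₂` with associated
probability graphons `Ũ, W̃`, and let `f₁, …, f_k` be the indicator functions of a
measurable partition of `[0,1]`.  For every `ε > 0` there is a `δ > 0` such that
`d_□(Ũ, W̃) < δ` implies `d_LP(S(f₁,…,f_k,W), S(f₁,…,f_k,U)) < ε`. -/
theorem levyProkhorov_S_lt_of_cutDist_lt
    {Ω₂ : Type*} [MeasurableSpace Ω₂] (P₂ : Measure Ω₂) [IsProbabilityMeasure P₂]
    (U W : unitInterval × unitInterval × Ω₂ → ℝ)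
    (hU : Measurable U) (hW : Measurable W)
    (k : ℕ) (hk : 1 ≤ k)
    (P : Fin k → Set unitInterval) (hPm : ∀ i, MeasurableSet (P i))
    (hPd : Pairwise (Function.onFun Disjoint P)) (hPu : (⋃ i, P i) = univ) :
    ∀ ε > (0 : ℝ), ∃ δ > (0 : ℝ),
      cutDistKer (assocGraphon P₂ U) (assocGraphon P₂ W) < δ →
      levyProkhorovDist
        (Smeasure (volume : Measure unitInterval) P₂
          (fun i => (P i).indicator fun _ => (1 : ℝ)) W)
        (Smeasure (volume : Measure unitInterval) P₂
          (fun i => (P i).indicator fun _ => (1 : ℝ)) U) < ε := by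
  classical
  intro ε hε
  set δ : ℝ := ε / ((k : ℝ) ^ 2 + 1) with hδdef
  have hk2pos : (0 : ℝ) < (k : ℝ) ^ 2 + 1 := by positivity
  have hδpos : 0 < δ := div_pos hε hk2pos
  refine ⟨δ, hδpos, fun hcut => ?_⟩
  have hmass : ∀ (V : unitInterval × unitInterval × Ω₂ → ℝ), Measurable V →
      ∀ (p : {S : Set unitInterval // MeasurableSet S} ×
          {T : Set unitInterval // MeasurableSet T}),
      graphonInt (assocGraphon P₂ V) (p.1.1 ×ˢ p.2.1) univ ≤ 1 :=
    fun V hV p => graphonInt_mass_le_one P₂ V hV p.1.2 p.2.2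
  have hedistle : ∀ (p : {S : Set unitInterval // MeasurableSet S} ×
      {T : Set unitInterval // MeasurableSet T}),
      levyProkhorovEDist (graphonInt (assocGraphon P₂ U) (p.1.1 ×ˢ p.2.1))
        (graphonInt (assocGraphon P₂ W) (p.1.1 ×ˢ p.2.1)) ≤ 1 := by
    intro p
    exact (levyProkhorovEDist_le_max_measure_univ _ _).trans
      (max_le (hmass U hU p) (hmass W hW p))
  have hBdd : BddAbove (range fun p : {S : Set unitInterval // MeasurableSet S} ×
      {T : Set unitInterval // MeasurableSet T} =>
      levyProkhorovDist (graphonInt (assocGraphon P₂ U) (p.1.1 ×ˢ p.2.1))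
        (graphonInt (assocGraphon P₂ W) (p.1.1 ×ˢ p.2.1))) := by
    refine ⟨1, ?_⟩
    rintro r ⟨p, rfl⟩
    simpa [levyProkhorovDist] using ENNReal.toReal_mono ENNReal.one_ne_top (hedistle p)
  have hcell : ∀ i j : Fin k, levyProkhorovEDist
      (graphonInt (assocGraphon P₂ U) (P i ×ˢ P j))
      (graphonInt (assocGraphon P₂ W) (P i ×ˢ P j)) < ENNReal.ofReal δ := by
    intro i j
    have hle : levyProkhorovDist (graphonInt (assocGraphon P₂ U) (P i ×ˢ P j))
        (graphonInt (assocGraphon P₂ W) (P i ×ˢ P j))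
        ≤ cutDistKer (assocGraphon P₂ U) (assocGraphon P₂ W) :=
      le_ciSup hBdd (⟨⟨P i, hPm i⟩, ⟨P j, hPm j⟩⟩ :
        {S : Set unitInterval // MeasurableSet S} ×
        {T : Set unitInterval // MeasurableSet T})
    have hlt := lt_of_le_of_lt hle hcut
    have hfin : levyProkhorovEDist (graphonInt (assocGraphon P₂ U) (P i ×ˢ P j))
        (graphonInt (assocGraphon P₂ W) (P i ×ˢ P j)) ≠ ⊤ :=
      ne_top_of_le_ne_top ENNReal.one_ne_top
        (hedistle ⟨⟨P i, hPm i⟩, ⟨P j, hPm j⟩⟩)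
    rw [← ENNReal.ofReal_toReal hfin]
    exact (ENNReal.ofReal_lt_ofReal_iff hδpos).mpr hlt
  have hWU : ∀ (i j : Fin k) (B' : Set ℝ), MeasurableSet B' →
      graphonInt (assocGraphon P₂ W) (P i ×ˢ P j) B'
        ≤ graphonInt (assocGraphon P₂ U) (P i ×ˢ P j) (Metric.thickening δ B')
          + ENNReal.ofReal δ := by
    intro i j B' hB'
    have h := right_measure_le_of_levyProkhorovEDist_lt (hcell i j) hB'
    rwa [ENNReal.toReal_ofReal hδpos.le] at h
  have hUW : ∀ (i j : Fin k) (B' : Set ℝ), MeasurableSet B' →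
      graphonInt (assocGraphon P₂ U) (P i ×ˢ P j) B'
        ≤ graphonInt (assocGraphon P₂ W) (P i ×ˢ P j) (Metric.thickening δ B')
          + ENNReal.ofReal δ := by
    intro i j B' hB'
    have h := left_measure_le_of_levyProkhorovEDist_lt (hcell i j) hB'
    rwa [ENNReal.toReal_ofReal hδpos.le] at h
  have key : ∀ (V₁ V₂ : unitInterval × unitInterval × Ω₂ → ℝ),
      Measurable V₁ → Measurable V₂ →
      (∀ (i j : Fin k) (B' : Set ℝ), MeasurableSet B' →
        graphonInt (assocGraphon P₂ V₁) (P i ×ˢ P j) B'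
          ≤ graphonInt (assocGraphon P₂ V₂) (P i ×ˢ P j) (Metric.thickening δ B')
            + ENNReal.ofReal δ) →
      ∀ (η : ℝ≥0∞) (B : Set (RE (2 * k + 1))),
        ENNReal.ofReal ((k : ℝ) ^ 2 * δ) < η → η < ⊤ → MeasurableSet B →
        Smeasure (volume : Measure unitInterval) P₂
            (fun i => (P i).indicator fun _ => (1 : ℝ)) V₁ B
          ≤ Smeasure (volume : Measure unitInterval) P₂
              (fun i => (P i).indicator fun _ => (1 : ℝ)) V₂
              (Metric.thickening η.toReal B) + η := by
    intro V₁ V₂ h1 h2 hij η B hη hηtop hB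
    have hδη : δ ≤ η.toReal := by
      have h3 : (k : ℝ) ^ 2 * δ < η.toReal :=
        (ENNReal.ofReal_lt_iff_lt_toReal (by positivity) hηtop.ne).mp hη
      have hk1 : (1 : ℝ) ≤ (k : ℝ) ^ 2 := by
        have : (1 : ℝ) ≤ (k : ℝ) := by exact_mod_cast hk
        nlinarith
      nlinarith
    rw [Smeasure_apply_eq_sum P₂ V₁ h1 P hPm hPd hPu hB,
      Smeasure_apply_eq_sum P₂ V₂ h2 P hPm hPd hPu
        (Metric.isOpen_thickening.measurableSet)]
    calc ∑ p : Fin k × Fin k, graphonInt (assocGraphon P₂ V₁) (P p.1 ×ˢ P p.2)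
          (cellEmb k p.1 p.2 ⁻¹' B)
        ≤ ∑ p : Fin k × Fin k, (graphonInt (assocGraphon P₂ V₂) (P p.1 ×ˢ P p.2)
            (cellEmb k p.1 p.2 ⁻¹' (Metric.thickening η.toReal B)) + ENNReal.ofReal δ) := by
          refine Finset.sum_le_sum fun p _ => ?_
          refine le_trans (hij p.1 p.2 _ (measurable_cellEmb p.1 p.2 hB)) ?_
          have hsub : Metric.thickening δ (cellEmb k p.1 p.2 ⁻¹' B)
              ⊆ cellEmb k p.1 p.2 ⁻¹' (Metric.thickening η.toReal B) :=
            (cellEmb_thickening_subset p.1 p.2).trans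
              (preimage_mono (Metric.thickening_mono hδη B))
          exact add_le_add_left (measure_mono hsub) _
      _ = (∑ p : Fin k × Fin k, graphonInt (assocGraphon P₂ V₂) (P p.1 ×ˢ P p.2)
            (cellEmb k p.1 p.2 ⁻¹' (Metric.thickening η.toReal B)))
            + (k * k) • ENNReal.ofReal δ := by
          rw [Finset.sum_add_distrib, Finset.sum_const, Finset.card_univ,
            Fintype.card_prod, Fintype.card_fin]
      _ ≤ (∑ p : Fin k × Fin k, graphonInt (assocGraphon P₂ V₂) (P p.1 ×ˢ P p.2)
            (cellEmb k p.1 p.2 ⁻¹' (Metric.thickening η.toReal B))) + η := by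
          refine add_le_add_right ?_ _
          have hc : ((k * k : ℕ) : ℝ≥0∞) * ENNReal.ofReal δ
              = ENNReal.ofReal ((k : ℝ) ^ 2 * δ) := by
            rw [← ENNReal.ofReal_natCast, ← ENNReal.ofReal_mul (by positivity)]
            congr 1
            push_cast
            ring
          rw [nsmul_eq_mul, hc]
          exact hη.le
  have hedist : levyProkhorovEDist
      (Smeasure (volume : Measure unitInterval) P₂
        (fun i => (P i).indicator fun _ => (1 : ℝ)) W)
      (Smeasure (volume : Measure unitInterval) P₂
        (fun i => (P i).indicator fun _ => (1 : ℝ)) U)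
      ≤ ENNReal.ofReal ((k : ℝ) ^ 2 * δ) :=
    levyProkhorovEDist_le_of_forall _ _ _ fun η B hη hηtop hB =>
      ⟨key W U hW hU hWU η B hη hηtop hB, key U W hU hW hUW η B hη hηtop hB⟩
  have hfinal : levyProkhorovDist
      (Smeasure (volume : Measure unitInterval) P₂
        (fun i => (P i).indicator fun _ => (1 : ℝ)) W)
      (Smeasure (volume : Measure unitInterval) P₂
        (fun i => (P i).indicator fun _ => (1 : ℝ)) U)
      ≤ (k : ℝ) ^ 2 * δ := by
    have h := ENNReal.toReal_mono ENNReal.ofReal_ne_top hedist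
    rwa [ENNReal.toReal_ofReal (by positivity)] at h
  refine lt_of_le_of_lt hfinal ?_
  rw [hδdef, ← mul_div_assoc, div_lt_iff₀ hk2pos]
  nlinarith


end
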